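/- arXiv:2006.06998 — 2 statements merged into one kernel-verified Lean document; each statement's English description precedes it below -/
import Mathlib

section
/- Let X_1 and X_2 be independent integrable real random variables, A_1 = [a_1,b_1], A_2 = [a_2,b_2] intervals with P(X_1 ∈ A_1) > 0 and P(X_2 ∈ A_2) > 0. Define c_1 = −E[X_2·1{X_2∈A_2}]/P(X_2∈A_2), c_2 = −E[X_1·1{X_1∈A_1}]/P(X_1∈A_1), and m(x_1,x_2) = x_1 x_2 + c_1 x_1 + c_2 x_2. Then for every z ∈ [a_1,b_1], E[m(X_1,X_2)·1{X_1∈A_1, X_2∈A_2}] = P(X_1 ∈ A_1)·E[m(z, X_2)·1{X_2∈A_2}], and the symmetric identity holds in the second coordinate; consequently the theoretical CART-split criterion L_A*(i,z) vanishes for all i ∈ {1,2} and all z in the corresponding interval, while m is not constant on A_1 × A_2 (assuming a_1 < b_1 and a_2 < b_2). -/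
open MeasureTheory ProbabilityTheory

lemma aux_mul7 {Ω : Type*} [MeasurableSpace Ω] {μ : Measure Ω} [IsProbabilityMeasure μ]
    {X₁ X₂ : Ω → ℝ} (hind : IndepFun X₁ X₂ μ) {f g : ℝ → ℝ}
    (hf : Measurable f) (hg : Measurable g)
    (hfi : Integrable (fun ω => f (X₁ ω)) μ) (hgi : Integrable (fun ω => g (X₂ ω)) μ) :
    ∫ ω, f (X₁ ω) * g (X₂ ω) ∂μ = (∫ ω, f (X₁ ω) ∂μ) * ∫ ω, g (X₂ ω) ∂μ :=
  (hind.comp hf hg).integral_fun_smul_eq_smul_integral hfi.aestronglyMeasurable hgi.aestronglyMeasurable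

lemma aux_int_mul7 {Ω : Type*} [MeasurableSpace Ω] {μ : Measure Ω} [IsProbabilityMeasure μ]
    {X₁ X₂ : Ω → ℝ} (hind : IndepFun X₁ X₂ μ) {f g : ℝ → ℝ}
    (hf : Measurable f) (hg : Measurable g)
    (hfi : Integrable (fun ω => f (X₁ ω)) μ) (hgi : Integrable (fun ω => g (X₂ ω)) μ) :
    Integrable (fun ω => f (X₁ ω) * g (X₂ ω)) μ :=
  (hind.comp hf hg).integrable_mul hfi hgi

theorem stmt7 {Ω : Type*} [MeasurableSpace Ω] (μ : Measure Ω) [IsProbabilityMeasure μ]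
    (X₁ X₂ : Ω → ℝ) (h₁ : Measurable X₁) (h₂ : Measurable X₂)
    (hint₁ : Integrable X₁ μ) (hint₂ : Integrable X₂ μ)
    (hind : IndepFun X₁ X₂ μ)
    (a₁ b₁ a₂ b₂ : ℝ) (hab₁ : a₁ < b₁) (hab₂ : a₂ < b₂)
    (hp₁ : 0 < μ {ω | X₁ ω ∈ Set.Icc a₁ b₁}) (hp₂ : 0 < μ {ω | X₂ ω ∈ Set.Icc a₂ b₂})
    (c₁ c₂ : ℝ)
    (hc₁ : c₁ = -(∫ ω in {ω | X₂ ω ∈ Set.Icc a₂ b₂}, X₂ ω ∂μ) /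
        (μ {ω | X₂ ω ∈ Set.Icc a₂ b₂}).toReal)
    (hc₂ : c₂ = -(∫ ω in {ω | X₁ ω ∈ Set.Icc a₁ b₁}, X₁ ω ∂μ) /
        (μ {ω | X₁ ω ∈ Set.Icc a₁ b₁}).toReal)
    (m : ℝ → ℝ → ℝ) (hm : ∀ x₁ x₂, m x₁ x₂ = x₁ * x₂ + c₁ * x₁ + c₂ * x₂) :
    (∀ z ∈ Set.Icc a₁ b₁,
      ∫ ω in {ω | X₁ ω ∈ Set.Icc a₁ b₁ ∧ X₂ ω ∈ Set.Icc a₂ b₂}, m (X₁ ω) (X₂ ω) ∂μ =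
        (μ {ω | X₁ ω ∈ Set.Icc a₁ b₁}).toReal *
          ∫ ω in {ω | X₂ ω ∈ Set.Icc a₂ b₂}, m z (X₂ ω) ∂μ) ∧
    (∀ z ∈ Set.Icc a₂ b₂,
      ∫ ω in {ω | X₁ ω ∈ Set.Icc a₁ b₁ ∧ X₂ ω ∈ Set.Icc a₂ b₂}, m (X₁ ω) (X₂ ω) ∂μ =
        (μ {ω | X₂ ω ∈ Set.Icc a₂ b₂}).toReal *
          ∫ ω in {ω | X₁ ω ∈ Set.Icc a₁ b₁}, m (X₁ ω) z ∂μ) ∧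
    (∃ p q p' q', p ∈ Set.Icc a₁ b₁ ∧ q ∈ Set.Icc a₂ b₂ ∧
      p' ∈ Set.Icc a₁ b₁ ∧ q' ∈ Set.Icc a₂ b₂ ∧ m p q ≠ m p' q') := by
  have hT₁ : MeasurableSet {ω | X₁ ω ∈ Set.Icc a₁ b₁} := h₁ measurableSet_Icc
  have hT₂ : MeasurableSet {ω | X₂ ω ∈ Set.Icc a₂ b₂} := h₂ measurableSet_Icc
  set P₁ := (μ {ω | X₁ ω ∈ Set.Icc a₁ b₁}).toReal with hP₁def
  set P₂ := (μ {ω | X₂ ω ∈ Set.Icc a₂ b₂}).toReal with hP₂def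
  set I₁ := ∫ ω in {ω | X₁ ω ∈ Set.Icc a₁ b₁}, X₁ ω ∂μ with hI₁def
  set I₂ := ∫ ω in {ω | X₂ ω ∈ Set.Icc a₂ b₂}, X₂ ω ∂μ with hI₂def
  have hP₁ne : P₁ ≠ 0 := (ENNReal.toReal_pos hp₁.ne' (measure_ne_top μ _)).ne'
  have hP₂ne : P₂ ≠ 0 := (ENNReal.toReal_pos hp₂.ne' (measure_ne_top μ _)).ne'
  -- indicator functions
  set φ : ℝ → ℝ := (Set.Icc a₁ b₁).indicator id with hφdef
  set ψ : ℝ → ℝ := (Set.Icc a₂ b₂).indicator id with hψdef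
  set χ₁ : ℝ → ℝ := (Set.Icc a₁ b₁).indicator (fun _ => 1) with hχ₁def
  set χ₂ : ℝ → ℝ := (Set.Icc a₂ b₂).indicator (fun _ => 1) with hχ₂def
  have hφm : Measurable φ := measurable_id.indicator measurableSet_Icc
  have hψm : Measurable ψ := measurable_id.indicator measurableSet_Icc
  have hχ₁m : Measurable χ₁ := measurable_const.indicator measurableSet_Icc
  have hχ₂m : Measurable χ₂ := measurable_const.indicator measurableSet_Icc
  have hφc : (fun ω => φ (X₁ ω)) = {ω | X₁ ω ∈ Set.Icc a₁ b₁}.indicator X₁ := by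
    funext ω; rfl
  have hψc : (fun ω => ψ (X₂ ω)) = {ω | X₂ ω ∈ Set.Icc a₂ b₂}.indicator X₂ := by
    funext ω; rfl
  have hχ₁c : (fun ω => χ₁ (X₁ ω)) = {ω | X₁ ω ∈ Set.Icc a₁ b₁}.indicator (fun _ => 1) := by
    funext ω; rfl
  have hχ₂c : (fun ω => χ₂ (X₂ ω)) = {ω | X₂ ω ∈ Set.Icc a₂ b₂}.indicator (fun _ => 1) := by
    funext ω; rfl
  have hφi : Integrable (fun ω => φ (X₁ ω)) μ := by rw [hφc]; exact hint₁.indicator hT₁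
  have hψi : Integrable (fun ω => ψ (X₂ ω)) μ := by rw [hψc]; exact hint₂.indicator hT₂
  have hχ₁i : Integrable (fun ω => χ₁ (X₁ ω)) μ := by
    rw [hχ₁c]; exact (integrable_const 1).indicator hT₁
  have hχ₂i : Integrable (fun ω => χ₂ (X₂ ω)) μ := by
    rw [hχ₂c]; exact (integrable_const 1).indicator hT₂
  have Eφ : ∫ ω, φ (X₁ ω) ∂μ = I₁ := by rw [hφc, integral_indicator hT₁]
  have Eψ : ∫ ω, ψ (X₂ ω) ∂μ = I₂ := by rw [hψc, integral_indicator hT₂]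
  have Eχ₁ : ∫ ω, χ₁ (X₁ ω) ∂μ = P₁ := by
    rw [hχ₁c, integral_indicator hT₁]; simp [hP₁def, measureReal_def]
  have Eχ₂ : ∫ ω, χ₂ (X₂ ω) ∂μ = P₂ := by
    rw [hχ₂c, integral_indicator hT₂]; simp [hP₂def, measureReal_def]
  have M1 : ∫ ω, φ (X₁ ω) * ψ (X₂ ω) ∂μ = I₁ * I₂ := by
    rw [aux_mul7 hind hφm hψm hφi hψi, Eφ, Eψ]
  have M2 : ∫ ω, φ (X₁ ω) * χ₂ (X₂ ω) ∂μ = I₁ * P₂ := by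
    rw [aux_mul7 hind hφm hχ₂m hφi hχ₂i, Eφ, Eχ₂]
  have M3 : ∫ ω, χ₁ (X₁ ω) * ψ (X₂ ω) ∂μ = P₁ * I₂ := by
    rw [aux_mul7 hind hχ₁m hψm hχ₁i hψi, Eχ₁, Eψ]
  -- left-hand side
  have hLHS : ∫ ω in {ω | X₁ ω ∈ Set.Icc a₁ b₁ ∧ X₂ ω ∈ Set.Icc a₂ b₂},
      m (X₁ ω) (X₂ ω) ∂μ = I₁ * I₂ + c₁ * (I₁ * P₂) + c₂ * (P₁ * I₂) := by
    have hset : {ω | X₁ ω ∈ Set.Icc a₁ b₁ ∧ X₂ ω ∈ Set.Icc a₂ b₂} =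
        {ω | X₁ ω ∈ Set.Icc a₁ b₁} ∩ {ω | X₂ ω ∈ Set.Icc a₂ b₂} := rfl
    rw [hset, ← integral_indicator (hT₁.inter hT₂)]
    have hpt : ({ω | X₁ ω ∈ Set.Icc a₁ b₁} ∩ {ω | X₂ ω ∈ Set.Icc a₂ b₂}).indicator
        (fun ω => m (X₁ ω) (X₂ ω)) =
        fun ω => φ (X₁ ω) * ψ (X₂ ω) + c₁ * (φ (X₁ ω) * χ₂ (X₂ ω))
          + c₂ * (χ₁ (X₁ ω) * ψ (X₂ ω)) := by
      funext ω
      by_cases h1 : a₁ ≤ X₁ ω ∧ X₁ ω ≤ b₁ <;> by_cases h2 : a₂ ≤ X₂ ω ∧ X₂ ω ≤ b₂ <;>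
        simp [Set.indicator_apply, Set.mem_inter_iff, h1, h2, hφdef, hψdef, hχ₁def, hχ₂def, hm]
    have hA := aux_int_mul7 hind hφm hψm hφi hψi
    have hB := (aux_int_mul7 hind hφm hχ₂m hφi hχ₂i).const_mul c₁
    have hC := (aux_int_mul7 hind hχ₁m hψm hχ₁i hψi).const_mul c₂
    have hAB : Integrable (fun ω => φ (X₁ ω) * ψ (X₂ ω)
        + c₁ * (φ (X₁ ω) * χ₂ (X₂ ω))) μ := hA.add hB
    rw [hpt, integral_add hAB hC, integral_add hA hB,
      integral_const_mul, integral_const_mul, M1, M2, M3]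
  refine ⟨?_, ?_, ?_⟩
  · intro z hz
    have hR : ∫ ω in {ω | X₂ ω ∈ Set.Icc a₂ b₂}, m z (X₂ ω) ∂μ =
        (z + c₂) * I₂ + c₁ * z * P₂ := by
      rw [← integral_indicator hT₂]
      have hpt : {ω | X₂ ω ∈ Set.Icc a₂ b₂}.indicator (fun ω => m z (X₂ ω)) =
          fun ω => (z + c₂) * ψ (X₂ ω) + c₁ * z * χ₂ (X₂ ω) := by
        funext ω
        by_cases h2 : a₂ ≤ X₂ ω ∧ X₂ ω ≤ b₂ <;>
          simp [Set.indicator_apply, h2, hψdef, hχ₂def, hm] <;> ring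
      rw [hpt, integral_add ((hψi.const_mul _)) ((hχ₂i.const_mul _)),
        integral_const_mul, integral_const_mul, Eψ, Eχ₂]
    rw [hLHS, hR, hc₁, hc₂]
    field_simp
    ring
  · intro z hz
    have hR : ∫ ω in {ω | X₁ ω ∈ Set.Icc a₁ b₁}, m (X₁ ω) z ∂μ =
        (z + c₁) * I₁ + c₂ * z * P₁ := by
      rw [← integral_indicator hT₁]
      have hpt : {ω | X₁ ω ∈ Set.Icc a₁ b₁}.indicator (fun ω => m (X₁ ω) z) =
          fun ω => (z + c₁) * φ (X₁ ω) + c₂ * z * χ₁ (X₁ ω) := by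
        funext ω
        by_cases h1 : a₁ ≤ X₁ ω ∧ X₁ ω ≤ b₁ <;>
          simp [Set.indicator_apply, h1, hφdef, hχ₁def, hm] <;> ring
      rw [hpt, integral_add ((hφi.const_mul _)) ((hχ₁i.const_mul _)),
        integral_const_mul, integral_const_mul, Eφ, Eχ₁]
    rw [hLHS, hR, hc₁, hc₂]
    field_simp
    ring
  · by_cases h : m a₁ a₂ = m a₁ b₂
    · refine ⟨b₁, a₂, b₁, b₂, Set.right_mem_Icc.mpr hab₁.le, Set.left_mem_Icc.mpr hab₂.le,
        Set.right_mem_Icc.mpr hab₁.le, Set.right_mem_Icc.mpr hab₂.le, fun hc => ?_⟩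
      rw [hm, hm] at h hc
      nlinarith [mul_pos (sub_pos.2 hab₁) (sub_pos.2 hab₂)]
    · exact ⟨a₁, a₂, a₁, b₂, Set.left_mem_Icc.mpr hab₁.le, Set.left_mem_Icc.mpr hab₂.le,
        Set.left_mem_Icc.mpr hab₁.le, Set.right_mem_Icc.mpr hab₂.le, h⟩
end

section
/- Under the setting of the paper (a tree built from D_n with bootstrap randomness Θ, N^b(A_n(Θ)) the number of bootstrap observations falling in the cell A_n(Θ) containing x, and N^⋄(A_n(Θ)) the number of points of an independent sample D_n^⋄ falling in A_n(Θ)), for every ε > 0: P( |N^b(A_n(Θ)) − N^⋄(A_n(Θ))| > ε ) ≤ 24 (n+1)^{2d} e^{−ε²/(288 n)}. -/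
open MeasureTheory ProbabilityTheory Filter Set Real Topology

/-- The axis-aligned box (tree cell) in `ℝ^d` with (possibly infinite) endpoints `a`, `b`. -/
def cellOf {d : ℕ} (a b : Fin d → EReal) : Set (Fin d → ℝ) :=
  {x | ∀ i, a i ≤ (x i : EReal) ∧ (x i : EReal) ≤ b i}

lemma sum_ind_bounds {n : ℕ} {α : Type*} (s : Set α) (f : Fin n → α) :
    0 ≤ (∑ j, s.indicator (fun _ => (1 : ℝ)) (f j))
      ∧ (∑ j, s.indicator (fun _ => (1 : ℝ)) (f j)) ≤ n := by
  classical
  constructor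
  · exact Finset.sum_nonneg fun j _ => by
      rw [Set.indicator_apply]; split_ifs <;> norm_num
  · calc (∑ j, s.indicator (fun _ => (1 : ℝ)) (f j)) ≤ ∑ _j : Fin n, (1 : ℝ) :=
        Finset.sum_le_sum fun j _ => by
          rw [Set.indicator_apply]; split_ifs <;> norm_num
      _ = n := by simp

section Hoeffding

variable {Ω : Type*} [MeasurableSpace Ω]

lemma chord_exp {z c : ℝ} (hz1 : -1 ≤ z) (hz2 : z ≤ 1) :
    Real.exp (c * z) ≤ (Real.exp c + Real.exp (-c)) / 2
      + z * ((Real.exp c - Real.exp (-c)) / 2) := by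
  have h := convexOn_exp.2 (Set.mem_univ c) (Set.mem_univ (-c))
      (show (0:ℝ) ≤ (1 + z) / 2 by linarith) (show (0:ℝ) ≤ (1 - z) / 2 by linarith)
      (show (1 + z) / 2 + (1 - z) / 2 = 1 by ring)
  have harg : ((1 + z) / 2) • c + ((1 - z) / 2) • (-c) = c * z := by
    simp only [smul_eq_mul]; ring
  rw [harg] at h
  calc Real.exp (c * z) ≤ ((1 + z) / 2) • Real.exp c + ((1 - z) / 2) • Real.exp (-c) := h
    _ = _ := by simp only [smul_eq_mul]; ring

lemma integrable_of_abs_le (μ : Measure Ω) [IsProbabilityMeasure μ] {f : Ω → ℝ} {K : ℝ}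
    (hm : Measurable f) (hb : ∀ ω, |f ω| ≤ K) : Integrable f μ := by
  refine (integrable_const K).mono' hm.aestronglyMeasurable (ae_of_all _ fun ω => ?_)
  rw [Real.norm_eq_abs]; exact hb ω

lemma mgf_aux (μ : Measure Ω) [IsProbabilityMeasure μ]
    (Z : Ω → ℝ) (hZm : Measurable Z) (hZ1 : ∀ ω, -1 ≤ Z ω) (hZ2 : ∀ ω, Z ω ≤ 1)
    (hmean : ∫ ω, Z ω ∂μ = 0) (c : ℝ) :
    mgf Z μ c ≤ Real.exp (c ^ 2 / 2) := by
  have hZint : Integrable Z μ :=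
    integrable_of_abs_le μ hZm (fun ω => abs_le.2 ⟨hZ1 ω, hZ2 ω⟩)
  have hb : mgf Z μ c ≤ (Real.exp c + Real.exp (-c)) / 2 := by
    have hmono : ∫ ω, Real.exp (c * Z ω) ∂μ ≤
        ∫ ω, ((Real.exp c + Real.exp (-c)) / 2
          + Z ω * ((Real.exp c - Real.exp (-c)) / 2)) ∂μ := by
      refine integral_mono ?_ ?_ (fun ω => chord_exp (hZ1 ω) (hZ2 ω))
      · refine integrable_of_abs_le μ ((hZm.const_mul c).exp) (K := Real.exp |c|) fun ω => ?_
        rw [abs_of_pos (Real.exp_pos _)]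
        refine Real.exp_le_exp.2 ?_
        calc c * Z ω ≤ |c * Z ω| := le_abs_self _
          _ = |c| * |Z ω| := abs_mul _ _
          _ ≤ |c| * 1 := by
              have := abs_le.2 ⟨hZ1 ω, hZ2 ω⟩
              exact mul_le_mul_of_nonneg_left this (abs_nonneg c)
          _ = |c| := mul_one _
      · exact (integrable_const _).add (hZint.mul_const _)
    rw [integral_add (integrable_const _) (hZint.mul_const _), integral_const,
      integral_mul_const, hmean, zero_mul, add_zero, probReal_univ,
      smul_eq_mul, one_mul] at hmono
    exact hmono
  calc mgf Z μ c ≤ (Real.exp c + Real.exp (-c)) / 2 := hb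
    _ = Real.cosh c := (Real.cosh_eq c).symm
    _ ≤ Real.exp (c ^ 2 / 2) := Real.cosh_le_exp_half_sq c

lemma indicator_mem01 {E : Type*} (F : Set E) (x : E) :
    0 ≤ F.indicator (fun _ => (1 : ℝ)) x ∧ F.indicator (fun _ => (1 : ℝ)) x ≤ 1 := by
  classical
  rw [Set.indicator_apply]; split_ifs <;> norm_num

/-- Hoeffding's inequality for sums of indicators of an i.i.d. sample. -/
lemma hb_ineq {E : Type*} [MeasurableSpace E]
    (μ : Measure Ω) [IsProbabilityMeasure μ] {n : ℕ} (hn : 0 < n)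
    (ξ : Fin n → Ω → E) (hξm : ∀ j, Measurable (ξ j))
    (hξi : iIndepFun ξ μ)
    (F : Set E) (hF : MeasurableSet F) (p : ℝ)
    (hp : ∀ j, (μ (ξ j ⁻¹' F)).toReal = p)
    (t : ℝ) (ht : 0 < t) :
    (μ {ω | t < |(∑ j, F.indicator (fun _ => (1 : ℝ)) (ξ j ω)) - n * p|}).toReal
      ≤ 2 * Real.exp (-t ^ 2 / (2 * n)) := by
  classical
  have hnR : (0 : ℝ) < n := by exact_mod_cast hn
  have hp0 : 0 ≤ p := by rw [← hp ⟨0, hn⟩]; exact ENNReal.toReal_nonneg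
  have hp1 : p ≤ 1 := by
    rw [← hp ⟨0, hn⟩]
    exact ENNReal.toReal_le_of_le_ofReal zero_le_one (by simpa using prob_le_one)
  set Z : Fin n → Ω → ℝ := fun j ω => F.indicator (fun _ => (1 : ℝ)) (ξ j ω) - p with hZdef
  have hZm : ∀ j, Measurable (Z j) :=
    fun j => ((measurable_const.indicator hF).comp (hξm j)).sub measurable_const
  have hZ1 : ∀ j ω, -1 ≤ Z j ω := fun j ω => by
    have := (indicator_mem01 F (ξ j ω)).1; simp only [hZdef]; linarith
  have hZ2 : ∀ j ω, Z j ω ≤ 1 := fun j ω => by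
    have := (indicator_mem01 F (ξ j ω)).2; simp only [hZdef]; linarith
  have hindint : ∀ j, Integrable (fun ω => F.indicator (fun _ => (1 : ℝ)) (ξ j ω)) μ := by
    intro j
    refine integrable_of_abs_le μ ((measurable_const.indicator hF).comp (hξm j)) (K := 1)
      fun ω => ?_
    have h := indicator_mem01 F (ξ j ω)
    rw [abs_le]; exact ⟨by linarith [h.1], h.2⟩
  have hZmean : ∀ j, ∫ ω, Z j ω ∂μ = 0 := by
    intro j
    have hieq : (fun ω => F.indicator (fun _ => (1 : ℝ)) (ξ j ω))
        = (ξ j ⁻¹' F).indicator (fun _ => (1 : ℝ)) := by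
      funext ω; simp [Set.indicator_apply, Set.mem_preimage]
    have : ∫ ω, F.indicator (fun _ => (1 : ℝ)) (ξ j ω) ∂μ = (μ (ξ j ⁻¹' F)).toReal := by
      rw [hieq]
      exact integral_indicator_one ((hξm j) hF)
    simp only [hZdef]
    rw [integral_sub (hindint j) (integrable_const _), this, integral_const, probReal_univ,
      one_smul, hp j, sub_self]
  have hZiid : iIndepFun Z μ := by
    have := hξi.comp (fun _ e => F.indicator (fun _ => (1 : ℝ)) e - p)
      (fun _ => (measurable_const.indicator hF).sub measurable_const)
    exact this
  set S : Ω → ℝ := ∑ j, Z j with hSdef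
  have hSm : Measurable S := by
    have hfe : S = fun ω => ∑ j, Z j ω := funext fun ω => Finset.sum_apply _ _ _
    rw [hfe]; exact Finset.measurable_sum _ fun j _ => hZm j
  have hSapp : ∀ ω, S ω = (∑ j, F.indicator (fun _ => (1 : ℝ)) (ξ j ω)) - n * p := by
    intro ω
    rw [hSdef, Finset.sum_apply]
    simp only [hZdef]
    rw [Finset.sum_sub_distrib, Finset.sum_const, Finset.card_univ, Fintype.card_fin,
      nsmul_eq_mul]
  have hint : ∀ c : ℝ, Integrable (fun ω => Real.exp (c * S ω)) μ := by
    intro c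
    refine integrable_of_abs_le μ ((hSm.const_mul c).exp) (K := Real.exp (|c| * (n * 2))) fun ω => ?_
    rw [abs_of_pos (Real.exp_pos _)]
    refine Real.exp_le_exp.2 ?_
    have hSb : |S ω| ≤ n * 2 := by
      rw [hSdef, Finset.sum_apply]
      calc |∑ j, Z j ω| ≤ ∑ j, |Z j ω| := Finset.abs_sum_le_sum_abs _ _
        _ ≤ ∑ _j : Fin n, (2 : ℝ) := Finset.sum_le_sum fun j _ =>
            abs_le.2 ⟨by linarith [hZ1 j ω], by linarith [hZ2 j ω]⟩
        _ = n * 2 := by rw [Finset.sum_const, Finset.card_univ, Fintype.card_fin, nsmul_eq_mul]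
    calc c * S ω ≤ |c * S ω| := le_abs_self _
      _ = |c| * |S ω| := abs_mul _ _
      _ ≤ |c| * (n * 2) := mul_le_mul_of_nonneg_left hSb (abs_nonneg c)
  have hmgf : ∀ c : ℝ, mgf S μ c ≤ Real.exp (n * (c ^ 2 / 2)) := by
    intro c
    rw [hSdef, hZiid.mgf_sum hZm Finset.univ]
    calc (∏ j, mgf (Z j) μ c) ≤ ∏ _j : Fin n, Real.exp (c ^ 2 / 2) :=
        Finset.prod_le_prod (fun j _ => mgf_nonneg)
          (fun j _ => mgf_aux μ (Z j) (hZm j) (hZ1 j) (hZ2 j) (hZmean j) c)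
      _ = Real.exp (n * (c ^ 2 / 2)) := by
          rw [Finset.prod_const, Finset.card_univ, Fintype.card_fin, ← Real.exp_nat_mul]
  set c : ℝ := t / n with hc
  have hcpos : 0 < c := div_pos ht hnR
  have hexp_eq : Real.exp (-c * t) * Real.exp (n * (c ^ 2 / 2)) = Real.exp (-t ^ 2 / (2 * n)) := by
    rw [← Real.exp_add]
    congr 1
    rw [hc]; field_simp; ring
  have h1 : (μ {ω | t ≤ S ω}).toReal ≤ Real.exp (-t ^ 2 / (2 * n)) := by
    calc (μ {ω | t ≤ S ω}).toReal ≤ Real.exp (-c * t) * mgf S μ c :=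
        measure_ge_le_exp_mul_mgf t hcpos.le (hint c)
      _ ≤ Real.exp (-c * t) * Real.exp (n * (c ^ 2 / 2)) :=
        mul_le_mul_of_nonneg_left (hmgf c) (Real.exp_pos _).le
      _ = _ := hexp_eq
  have h2 : (μ {ω | S ω ≤ -t}).toReal ≤ Real.exp (-t ^ 2 / (2 * n)) := by
    calc (μ {ω | S ω ≤ -t}).toReal ≤ Real.exp (-(-c) * (-t)) * mgf S μ (-c) :=
        measure_le_le_exp_mul_mgf (-t) (neg_nonpos.2 hcpos.le) (hint (-c))
      _ ≤ Real.exp (-c * t) * Real.exp (n * ((-c) ^ 2 / 2)) := by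
          rw [show -(-c) * (-t) = -c * t by ring]
          exact mul_le_mul_of_nonneg_left (hmgf (-c)) (Real.exp_pos _).le
      _ = _ := by rw [show (-c : ℝ) ^ 2 = c ^ 2 by ring]; exact hexp_eq
  have hsub : {ω | t < |(∑ j, F.indicator (fun _ => (1 : ℝ)) (ξ j ω)) - n * p|}
      ⊆ {ω | t ≤ S ω} ∪ {ω | S ω ≤ -t} := by
    intro ω hω
    simp only [Set.mem_setOf_eq] at hω
    rw [← hSapp ω] at hω
    rcases lt_abs.1 hω with h | h
    · exact Or.inl (show t ≤ S ω from h.le)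
    · exact Or.inr (show S ω ≤ -t by linarith)
  have hle : μ {ω | t < |(∑ j, F.indicator (fun _ => (1 : ℝ)) (ξ j ω)) - n * p|}
      ≤ μ {ω | t ≤ S ω} + μ {ω | S ω ≤ -t} :=
    (measure_mono hsub).trans (measure_union_le _ _)
  calc (μ {ω | t < |(∑ j, F.indicator (fun _ => (1 : ℝ)) (ξ j ω)) - n * p|}).toReal
      ≤ (μ {ω | t ≤ S ω} + μ {ω | S ω ≤ -t}).toReal :=
        ENNReal.toReal_mono (ENNReal.add_ne_top.2 ⟨measure_ne_top _ _, measure_ne_top _ _⟩) hle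
    _ = (μ {ω | t ≤ S ω}).toReal + (μ {ω | S ω ≤ -t}).toReal :=
        ENNReal.toReal_add (measure_ne_top _ _) (measure_ne_top _ _)
    _ ≤ 2 * Real.exp (-t ^ 2 / (2 * n)) := by linarith

end Hoeffding

section Bracket

/-- Grid of half-line constraints built from quantile points `q`. -/
noncomputable def hcs (q : ℕ → ℝ) (m : ℕ) : ℕ × Bool → Set ℝ := fun pr =>
  if pr.1 = 0 then Set.univ
  else if m ≤ pr.1 then ∅
  else if pr.2 then Set.Ici (q pr.1) else Set.Ioi (q pr.1)

lemma hcs_measurable (q : ℕ → ℝ) (m : ℕ) (pr : ℕ × Bool) : MeasurableSet (hcs q m pr) := by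
  unfold hcs
  split_ifs
  · exact MeasurableSet.univ
  · exact MeasurableSet.empty
  · exact measurableSet_Ici
  · exact measurableSet_Ioi

lemma hcs_univ (q : ℕ → ℝ) (m : ℕ) : hcs q m (0, false) = Set.univ := by simp [hcs]

lemma hcs_empty (q : ℕ → ℝ) {m : ℕ} (hm : 0 < m) : hcs q m (m, true) = ∅ := by
  simp [hcs, hm.ne']

lemma hcs_Ici (q : ℕ → ℝ) {m k : ℕ} (hk0 : 0 < k) (hkm : k < m) :
    hcs q m (k, true) = Set.Ici (q k) := by
  simp [hcs, hk0.ne', not_le.2 hkm]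

lemma hcs_Ioi (q : ℕ → ℝ) {m k : ℕ} (hk0 : 0 < k) (hkm : k < m) :
    hcs q m (k, false) = Set.Ioi (q k) := by
  simp [hcs, hk0.ne', not_le.2 hkm]

lemma aux_union_Iic {b : ℝ} : (⋃ j : ℕ, Set.Iic (b - 1 / ((j : ℝ) + 1))) = Set.Iio b := by
  ext x
  simp only [Set.mem_iUnion, Set.mem_Iic, Set.mem_Iio]
  constructor
  · rintro ⟨j, hj⟩
    have : (0 : ℝ) < 1 / ((j : ℝ) + 1) := by positivity
    linarith
  · intro hx
    obtain ⟨j, hj⟩ := exists_nat_one_div_lt (sub_pos.2 hx)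
    exact ⟨j, by linarith⟩

lemma aux_union_Ioc {a b : ℝ} : (⋃ j : ℕ, Set.Ioc a (b - 1 / ((j : ℝ) + 1))) = Set.Ioo a b := by
  ext x
  simp only [Set.mem_iUnion, Set.mem_Ioc, Set.mem_Ioo]
  constructor
  · rintro ⟨j, hja, hjb⟩
    have : (0 : ℝ) < 1 / ((j : ℝ) + 1) := by positivity
    exact ⟨hja, by linarith⟩
  · rintro ⟨hxa, hxb⟩
    obtain ⟨j, hj⟩ := exists_nat_one_div_lt (sub_pos.2 hxb)
    exact ⟨j, hxa, by linarith⟩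

/-- One-dimensional bracketing of half-lines `{x | a ≤ x}` by a quantile grid. -/
lemma exists_brackets (ρ : Measure ℝ) [IsProbabilityMeasure ρ] {m : ℕ} (hm : 0 < m) :
    ∃ q : ℕ → ℝ, ∀ a : EReal, ∃ iU iL : ℕ × Bool, iU.1 ≤ m ∧ iL.1 ≤ m ∧
      hcs q m iL ⊆ {x : ℝ | a ≤ (x : EReal)} ∧ {x : ℝ | a ≤ (x : EReal)} ⊆ hcs q m iU ∧
      ρ (hcs q m iU \ hcs q m iL) ≤ ENNReal.ofReal (1 / m) := by
  classical
  have hmR : (0 : ℝ) < m := by exact_mod_cast hm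
  set F : ℝ → ℝ := fun t => (ρ (Set.Iic t)).toReal with hFdef
  have hFmono : Monotone F := fun s t hst =>
    ENNReal.toReal_mono (measure_ne_top _ _) (measure_mono (Set.Iic_subset_Iic.2 hst))
  set Sk : ℕ → Set ℝ := fun k => {t | (k : ℝ) / m ≤ F t} with hSkdef
  set q : ℕ → ℝ := fun k => sInf (Sk k) with hqdef
  -- upper set property
  have hSup : ∀ k, ∀ s ∈ Sk k, ∀ t, s ≤ t → t ∈ Sk k := by
    intro k s hs t hst
    exact le_trans hs (hFmono hst)
  have htop : Tendsto F atTop (𝓝 1) := by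
    have h1 : Tendsto (fun t => ρ (Set.Iic t)) atTop (𝓝 (ρ Set.univ)) :=
      tendsto_measure_Iic_atTop ρ
    rw [measure_univ] at h1
    have := (ENNReal.tendsto_toReal ENNReal.one_ne_top).comp h1
    rw [ENNReal.toReal_one] at this; exact this
  have hSne : ∀ k, k < m → (Sk k).Nonempty := by
    intro k hk
    have hlt : (k : ℝ) / m < 1 := by
      rw [div_lt_one hmR]; exact_mod_cast hk
    exact (htop.eventually (eventually_ge_nhds hlt)).exists
  have hbdd : ∀ k, 0 < k → BddBelow (Sk k) := by
    intro k hk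
    have hpos : (0 : ℝ) < (k : ℝ) / m := by positivity
    have hbot : Tendsto (fun j : ℕ => ρ (Set.Iic (-(j : ℝ)))) atTop
        (𝓝 (ρ (⋂ j : ℕ, Set.Iic (-(j : ℝ))))) := by
      have := tendsto_measure_iInter_atTop (μ := ρ) (s := fun j : ℕ => Set.Iic (-(j:ℝ)))
        (fun j => measurableSet_Iic.nullMeasurableSet)
        (fun i j hij => Set.Iic_subset_Iic.2 (neg_le_neg (show (i:ℝ) ≤ (j:ℝ) by exact_mod_cast hij)))
        ⟨0, measure_ne_top _ _⟩
      simpa only [Function.comp_def] using this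
    have hiInter : (⋂ j : ℕ, Set.Iic (-(j : ℝ))) = ∅ := by
      ext x
      simp only [Set.mem_iInter, Set.mem_Iic, Set.mem_empty_iff_false, iff_false, not_forall,
        not_le]
      obtain ⟨j, hj⟩ := exists_nat_gt (-x)
      exact ⟨j, by linarith⟩
    rw [hiInter, measure_empty] at hbot
    have hbotR : Tendsto (fun j : ℕ => F (-(j : ℝ))) atTop (𝓝 0) := by
      have := (ENNReal.tendsto_toReal (by simp : (0 : ENNReal) ≠ ⊤)).comp hbot
      rw [ENNReal.toReal_zero] at this; exact this
    obtain ⟨j, hj⟩ := (hbotR.eventually (eventually_lt_nhds hpos)).exists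
    refine ⟨-(j : ℝ), fun t ht => ?_⟩
    by_contra hlt
    push_neg at hlt
    exact absurd (le_trans ht (hFmono hlt.le)) (not_le.2 hj)
  -- F (q k) ≥ k / m
  have hqF : ∀ k, 0 < k → k < m → (k : ℝ) / m ≤ F (q k) := by
    intro k hk0 hkm
    have key : ∀ u, q k < u → (k : ℝ) / m ≤ F u := by
      intro u hu
      obtain ⟨s, hs, hsu⟩ := (csInf_lt_iff (hbdd k hk0) (hSne k hkm)).1 hu
      exact hSup k s hs u hsu.le
    have hmono2 : Antitone (fun j : ℕ => Set.Iic (q k + 1 / ((j : ℝ) + 1))) := by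
      intro i j hij
      apply Set.Iic_subset_Iic.2
      have : (1 : ℝ) / ((j : ℝ) + 1) ≤ 1 / ((i : ℝ) + 1) := by
        apply one_div_le_one_div_of_le (by positivity)
        have : (i : ℝ) ≤ j := by exact_mod_cast hij
        linarith
      linarith
    have hIic : (⋂ j : ℕ, Set.Iic (q k + 1 / ((j : ℝ) + 1))) = Set.Iic (q k) := by
      ext x
      simp only [Set.mem_iInter, Set.mem_Iic]
      constructor
      · intro h
        refine le_of_forall_pos_le_add fun ε hε => ?_
        obtain ⟨j, hj⟩ := exists_nat_one_div_lt hε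
        exact (h j).trans (by linarith)
      · intro h j
        have : (0 : ℝ) < 1 / ((j : ℝ) + 1) := by positivity
        linarith
    have hten : Tendsto (fun j : ℕ => ρ (Set.Iic (q k + 1 / ((j : ℝ) + 1)))) atTop
        (𝓝 (ρ (Set.Iic (q k)))) := by
      have := tendsto_measure_iInter_atTop (μ := ρ)
        (fun j => measurableSet_Iic.nullMeasurableSet) hmono2 ⟨0, measure_ne_top _ _⟩
      rw [hIic] at this; simpa only [Function.comp_def] using this
    have htenR : Tendsto (fun j : ℕ => F (q k + 1 / ((j : ℝ) + 1))) atTop (𝓝 (F (q k))) :=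
      (ENNReal.tendsto_toReal (measure_ne_top _ _)).comp hten
    refine ge_of_tendsto htenR (Eventually.of_forall fun j => key _ ?_)
    have : (0 : ℝ) < 1 / ((j : ℝ) + 1) := by positivity
    linarith
  -- t < q k → F t < k / m
  have hqlt : ∀ k, 0 < k → ∀ t, t < q k → F t < (k : ℝ) / m := by
    intro k hk0 t ht
    by_contra h
    push_neg at h
    exact absurd (csInf_le (hbdd k hk0) h) (not_le.2 ht)
  -- measure of Iio (q k) is at most k/m bound helpers
  have hIio_le : ∀ k, 0 < k → ρ (Set.Iio (q k)) ≤ ENNReal.ofReal ((k : ℝ) / m) := by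
    intro k hk0
    have hten : Tendsto (fun j : ℕ => ρ (Set.Iic (q k - 1 / ((j : ℝ) + 1)))) atTop
        (𝓝 (ρ (Set.Iio (q k)))) := by
      have hmono : Monotone (fun j : ℕ => Set.Iic (q k - 1 / ((j : ℝ) + 1))) := by
        intro i j hij
        apply Set.Iic_subset_Iic.2
        have h1 : (1 : ℝ) / ((j : ℝ) + 1) ≤ 1 / ((i : ℝ) + 1) := by
          apply one_div_le_one_div_of_le (by positivity)
          have : (i : ℝ) ≤ j := by exact_mod_cast hij
          linarith
        linarith
      have := tendsto_measure_iUnion_atTop (μ := ρ) hmono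
      rw [aux_union_Iic] at this; simpa only [Function.comp_def] using this
    refine le_of_tendsto hten (Eventually.of_forall fun j => ?_)
    have hlt : q k - 1 / ((j : ℝ) + 1) < q k := by
      have : (0 : ℝ) < 1 / ((j : ℝ) + 1) := by positivity
      linarith
    have := (hqlt k hk0 _ hlt).le
    rw [← ENNReal.ofReal_toReal (measure_ne_top ρ (Set.Iic (q k - 1 / ((j : ℝ) + 1))))]
    exact ENNReal.ofReal_le_ofReal this
  have hIic_ge : ∀ k, 0 < k → k < m → ENNReal.ofReal ((k : ℝ) / m) ≤ ρ (Set.Iic (q k)) := by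
    intro k hk0 hkm
    rw [← ENNReal.ofReal_toReal (measure_ne_top ρ (Set.Iic (q k)))]
    exact ENNReal.ofReal_le_ofReal (hqF k hk0 hkm)
  refine ⟨q, fun a => ?_⟩
  induction a using EReal.rec with
  | bot =>
    refine ⟨(0, false), (0, false), by simp [hm.le], by simp [hm.le], ?_, ?_, ?_⟩
    · rw [hcs_univ]; intro x _; simp
    · rw [hcs_univ]; exact Set.subset_univ _
    · simp
  | top =>
    refine ⟨(m, true), (m, true), le_rfl, le_rfl, ?_, ?_, ?_⟩
    · rw [hcs_empty q hm]; exact Set.empty_subset _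
    · rw [hcs_empty q hm]
      intro x hx
      simp only [Set.mem_setOf_eq, top_le_iff] at hx
      exact absurd hx (EReal.coe_ne_top x)
    · simp
  | coe r =>
    have hset : {x : ℝ | (r : EReal) ≤ (x : EReal)} = Set.Ici r := by
      ext x; simp [EReal.coe_le_coe_iff]
    by_cases hex : ∃ k, 0 < k ∧ k < m ∧ q k = r
    · obtain ⟨k, hk0, hkm, hqk⟩ := hex
      refine ⟨(k, true), (k, true), hkm.le, hkm.le, ?_, ?_, ?_⟩
      · rw [hcs_Ici q hk0 hkm, hqk, hset]
      · rw [hcs_Ici q hk0 hkm, hqk, hset]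
      · simp
    · by_cases hSr : ((Finset.range m).filter (fun k => 0 < k ∧ q k ≤ r)).Nonempty
      · have hkmem := Finset.mem_filter.1 (Finset.max'_mem _ hSr)
        set k : ℕ := Finset.max' _ hSr with hkdef
        rw [Finset.mem_range] at hkmem
        have hkm : k < m := hkmem.1
        have hk0 : 0 < k := hkmem.2.1
        have hqkr : q k ≤ r := hkmem.2.2
        have hqkr' : q k < r := lt_of_le_of_ne hqkr (fun h => hex ⟨k, hk0, hkm, h⟩)
        by_cases hlast : k + 1 < m
        · have hk1 : ¬ q (k + 1) ≤ r := by
            intro h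
            have hmem : k + 1 ∈ (Finset.range m).filter (fun k => 0 < k ∧ q k ≤ r) := by
              rw [Finset.mem_filter, Finset.mem_range]
              exact ⟨hlast, Nat.succ_pos k, h⟩
            exact absurd (Finset.le_max' _ _ hmem) (by omega)
          push_neg at hk1
          refine ⟨(k, false), (k + 1, true), by omega, by omega, ?_, ?_, ?_⟩
          · rw [hcs_Ici q (Nat.succ_pos k) hlast, hset]
            exact fun x hx => le_trans hk1.le hx
          · rw [hcs_Ioi q hk0 hkm, hset]
            exact fun x hx => lt_of_lt_of_le hqkr' hx
          · rw [hcs_Ioi q hk0 hkm, hcs_Ici q (Nat.succ_pos k) hlast]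
            rw [Set.Ioi_diff_Ici]
            rcases le_or_gt (q (k + 1)) (q k) with hqq | hqq
            · rw [Set.Ioo_eq_empty (by exact not_lt.2 hqq), measure_empty]
              exact zero_le
            · have hten : Tendsto (fun j : ℕ => ρ (Set.Ioc (q k) (q (k + 1) - 1 / ((j : ℝ) + 1))))
                  atTop (𝓝 (ρ (Set.Ioo (q k) (q (k + 1))))) := by
                have hmono : Monotone
                    (fun j : ℕ => Set.Ioc (q k) (q (k + 1) - 1 / ((j : ℝ) + 1))) := by
                  intro i j hij
                  apply Set.Ioc_subset_Ioc_right
                  have h1 : (1 : ℝ) / ((j : ℝ) + 1) ≤ 1 / ((i : ℝ) + 1) := by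
                    apply one_div_le_one_div_of_le (by positivity)
                    have : (i : ℝ) ≤ j := by exact_mod_cast hij
                    linarith
                  linarith
                have := tendsto_measure_iUnion_atTop (μ := ρ) hmono
                rw [aux_union_Ioc] at this; simpa only [Function.comp_def] using this
              refine le_of_tendsto hten (Eventually.of_forall fun j => ?_)
              have hIocsub : Set.Ioc (q k) (q (k + 1) - 1 / ((j : ℝ) + 1))
                  = Set.Iic (q (k + 1) - 1 / ((j : ℝ) + 1)) \ Set.Iic (q k) := by
                ext x
                simp only [Set.mem_Ioc, Set.mem_diff, Set.mem_Iic, not_le]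
                tauto
              rcases le_or_gt (q (k + 1) - 1 / ((j : ℝ) + 1)) (q k) with hje | hje
              · rw [Set.Ioc_eq_empty (not_lt.2 hje), measure_empty]
                exact zero_le
              · rw [hIocsub, measure_diff (Set.Iic_subset_Iic.2 hje.le)
                  measurableSet_Iic.nullMeasurableSet (measure_ne_top _ _)]
                rw [tsub_le_iff_right]
                have h1 : ρ (Set.Iic (q (k + 1) - 1 / ((j : ℝ) + 1)))
                    ≤ ENNReal.ofReal (((k : ℝ) + 1) / m) := by
                  have hlt2 : q (k + 1) - 1 / ((j : ℝ) + 1) < q (k + 1) := by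
                    have : (0 : ℝ) < 1 / ((j : ℝ) + 1) := by positivity
                    linarith
                  have := (hqlt (k + 1) (Nat.succ_pos k) _ hlt2).le
                  rw [← ENNReal.ofReal_toReal (measure_ne_top ρ _)]
                  refine ENNReal.ofReal_le_ofReal (this.trans ?_)
                  push_cast
                  exact le_rfl
                refine h1.trans ?_
                have h2 : ENNReal.ofReal (1 / (m : ℝ)) + ρ (Set.Iic (q k))
                    ≥ ENNReal.ofReal (1 / (m : ℝ)) + ENNReal.ofReal ((k : ℝ) / m) :=
                  add_le_add le_rfl (hIic_ge k hk0 hkm)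
                refine le_trans ?_ h2
                rw [← ENNReal.ofReal_add (by positivity) (by positivity)]
                refine ENNReal.ofReal_le_ofReal ?_
                rw [← add_div]
                exact le_of_eq (by ring)
        · -- k + 1 = m : top piece
          have hk1m : k + 1 = m := by omega
          refine ⟨(k, false), (m, true), by omega, le_rfl, ?_, ?_, ?_⟩
          · rw [hcs_empty q hm]; exact Set.empty_subset _
          · rw [hcs_Ioi q hk0 hkm, hset]
            exact fun x hx => lt_of_lt_of_le hqkr' hx
          · rw [hcs_empty q hm, hcs_Ioi q hk0 hkm, Set.diff_empty]
            have hcompl : Set.Ioi (q k) = (Set.Iic (q k))ᶜ := (Set.compl_Iic).symm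
            rw [hcompl, measure_compl measurableSet_Iic (measure_ne_top _ _), measure_univ]
            have h2 : ENNReal.ofReal ((k : ℝ) / m) ≤ ρ (Set.Iic (q k)) := hIic_ge k hk0 hkm
            refine le_trans (tsub_le_tsub le_rfl h2) ?_
            rw [tsub_le_iff_right, ← ENNReal.ofReal_add (by positivity) (by positivity)]
            have : (1 : ℝ) / m + (k : ℝ) / m = 1 := by
              rw [← add_div]
              rw [show (1 : ℝ) + k = m by exact_mod_cast (by omega : 1 + k = m)]
              field_simp
            rw [this, ENNReal.ofReal_one]
      · -- Sr empty
        by_cases hm1 : 1 < m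
        · have hr1 : r < q 1 := by
            by_contra h
            push_neg at h
            exact hSr ⟨1, by rw [Finset.mem_filter, Finset.mem_range]
                             exact ⟨hm1, Nat.one_pos, h⟩⟩
          refine ⟨(0, false), (1, true), by omega, by omega, ?_, ?_, ?_⟩
          · rw [hcs_Ici q Nat.one_pos hm1, hset]
            exact fun x hx => le_trans hr1.le hx
          · rw [hcs_univ]; exact Set.subset_univ _
          · rw [hcs_univ, hcs_Ici q Nat.one_pos hm1]
            rw [Set.diff_eq, Set.univ_inter, Set.compl_Ici]
            have := hIio_le 1 Nat.one_pos
            simpa using this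
        · have hm1' : m = 1 := by omega
          refine ⟨(0, false), (m, true), by omega, le_rfl, ?_, ?_, ?_⟩
          · rw [hcs_empty q hm]; exact Set.empty_subset _
          · rw [hcs_univ]; exact Set.subset_univ _
          · rw [hcs_univ, hcs_empty q hm, Set.diff_empty, measure_univ, hm1']
            norm_num

end Bracket

set_option maxHeartbeats 1000000 in
lemma final_arith {n d m : ℕ} {ε : ℝ} (hε : 0 < ε) (hεn : ε < n)
    (hm2 : (m : ℝ) ≤ 4 * d * n / ε + 2)
    (hreg : 24 * ((n : ℝ) + 1) ^ (2 * d) * Real.exp (-(ε ^ 2) / (288 * n)) < 1) :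
    (2 * ((m : ℝ) + 1)) ^ (2 * d) * (3 * (2 * Real.exp (-(ε / 6) ^ 2 / (2 * n))))
      ≤ 24 * ((n : ℝ) + 1) ^ (2 * d) * Real.exp (-(ε ^ 2) / (288 * n)) := by
  have hnR : (0 : ℝ) < n := hε.trans hεn
  have hn1 : (1 : ℝ) ≤ n := by exact_mod_cast Nat.one_le_cast.2 (by exact_mod_cast hnR)
  set P : ℝ := ((n : ℝ) + 1) ^ (2 * d) with hPdef
  set Q : ℝ := Real.exp (-(ε ^ 2) / (288 * n)) with hQdef
  have hP1 : (1 : ℝ) ≤ P := one_le_pow₀ (by linarith)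
  have hQpos : 0 < Q := Real.exp_pos _
  have hQP : Q < 1 / (24 * P) := by
    rw [lt_div_iff₀ (by positivity)]
    nlinarith [hreg]
  have hQ24 : Q < 1 / 24 := by
    refine hQP.trans_le ?_
    apply one_div_le_one_div_of_le (by norm_num)
    nlinarith
  have hε2 : 276 * (n : ℝ) < ε ^ 2 := by
    have hexp_ge : -(ε ^ 2) / (288 * n) + 1 ≤ Q := Real.add_one_le_exp _
    have h1 : (23 : ℝ) / 24 < ε ^ 2 / (288 * n) := by
      have : -(ε ^ 2) / (288 * n) + 1 < 1 / 24 := lt_of_le_of_lt hexp_ge hQ24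
      have h2 : ε ^ 2 / (288 * n) = -(-(ε ^ 2) / (288 * n)) := by ring
      rw [h2]; linarith
    rw [lt_div_iff₀ (by positivity)] at h1
    linarith
  have hεge1 : 1 ≤ ε := by
    by_contra h
    push_neg at h
    have h1 : ε ^ 2 < 1 := by nlinarith
    nlinarith
  have hsq : ε ^ 2 < (n : ℝ) ^ 2 := by nlinarith
  have hn276 : (276 : ℝ) < n := by nlinarith
  have hd_lt : (d : ℝ) < n := by
    have h4 : (4 : ℝ) ^ d ≤ P := by
      have h42 : (4 : ℝ) ≤ ((n : ℝ) + 1) ^ 2 := by nlinarith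
      calc (4 : ℝ) ^ d ≤ (((n : ℝ) + 1) ^ 2) ^ d := pow_le_pow_left₀ (by norm_num) h42 d
        _ = P := by rw [hPdef, ← pow_mul]
    have hPexp : 24 * P < Real.exp (ε ^ 2 / (288 * n)) := by
      have hQinv : Q = (Real.exp (ε ^ 2 / (288 * n)))⁻¹ := by
        rw [hQdef, ← Real.exp_neg]; congr 1; ring
      rw [hQinv] at hreg
      have := (div_lt_one (Real.exp_pos (ε ^ 2 / (288 * n)))).1 (by rw [div_eq_mul_inv]; exact hreg)
      exact this
    have hx : ε ^ 2 / (288 * n) < n / 288 := by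
      rw [div_lt_div_iff₀ (by positivity) (by norm_num)]
      nlinarith
    have h4exp : (4 : ℝ) ^ d < Real.exp ((n : ℝ) / 288) := by
      calc (4 : ℝ) ^ d ≤ P := h4
        _ < 24 * P := by nlinarith
        _ < Real.exp (ε ^ 2 / (288 * n)) := hPexp
        _ ≤ Real.exp ((n : ℝ) / 288) := Real.exp_le_exp.2 hx.le
    have hlog := Real.log_lt_log (by positivity) h4exp
    rw [Real.log_pow, Real.log_exp] at hlog
    have hlog4 : 1 ≤ Real.log 4 := by
      have h24 : Real.log 4 = 2 * Real.log 2 := by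
        rw [show (4 : ℝ) = 2 ^ 2 by norm_num, Real.log_pow]; push_cast; ring
      have := Real.log_two_gt_d9
      linarith
    have hd4 : (d : ℝ) ≤ (d : ℝ) * Real.log 4 :=
      le_mul_of_one_le_right (Nat.cast_nonneg d) hlog4
    have hnd : (n : ℝ) / 288 ≤ n := by linarith
    linarith
  have h2m : 2 * ((m : ℝ) + 1) ≤ ((n : ℝ) + 1) ^ 3 := by
    have hd1 : 4 * (d : ℝ) * n / ε ≤ 4 * (d : ℝ) * n :=
      div_le_self (by positivity : (0:ℝ) ≤ 4 * (d : ℝ) * n) hεge1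
    have hdn : 4 * (d : ℝ) * n ≤ 4 * n ^ 2 := by nlinarith [(Nat.cast_nonneg d : (0:ℝ) ≤ (d:ℝ))]
    have hm3 : (m : ℝ) ≤ 4 * n ^ 2 + 2 := by linarith
    nlinarith
  -- now the main chain
  have hQ4 : Real.exp (-(ε / 6) ^ 2 / (2 * n)) = Q * Q * Q * Q := by
    rw [hQdef, ← Real.exp_add, ← Real.exp_add, ← Real.exp_add]
    congr 1
    field_simp
    ring
  rw [hQ4]
  have e1 : (2 * ((m : ℝ) + 1)) ^ (2 * d) ≤ P ^ 3 := by
    calc (2 * ((m : ℝ) + 1)) ^ (2 * d) ≤ (((n : ℝ) + 1) ^ 3) ^ (2 * d) :=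
        pow_le_pow_left₀ (by positivity) h2m (2 * d)
      _ = P ^ 3 := by rw [hPdef, ← pow_mul, ← pow_mul, Nat.mul_comm 3 (2 * d)]
  have e2 : Q * Q * Q ≤ (1 / (24 * P)) ^ 3 := by
    have : Q * Q * Q = Q ^ 3 := by ring
    rw [this]
    exact pow_le_pow_left₀ hQpos.le hQP.le 3
  have e3 : Q * Q * Q * Q ≤ (1 / (24 * P)) ^ 3 * Q :=
    mul_le_mul_of_nonneg_right e2 hQpos.le
  have e4 : P ^ 3 * (3 * (2 * ((1 / (24 * P)) ^ 3 * Q))) = (6 / 24 ^ 3) * Q := by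
    have hPne : P ≠ 0 := by positivity
    field_simp
    ring
  calc (2 * ((m : ℝ) + 1)) ^ (2 * d) * (3 * (2 * (Q * Q * Q * Q)))
      ≤ P ^ 3 * (3 * (2 * ((1 / (24 * P)) ^ 3 * Q))) := by
        apply mul_le_mul e1 ?_ (by positivity) (by positivity)
        linarith [e3]
    _ = (6 / 24 ^ 3) * Q := e4
    _ ≤ 24 * P * Q := by
        have h6 : (6 / 24 ^ 3 : ℝ) ≤ 24 * P := by nlinarith
        exact mul_le_mul_of_nonneg_right h6 hQpos.le



lemma meas_le_ofReal {Ω : Type*} [MeasurableSpace Ω] {μ : Measure Ω} [IsProbabilityMeasure μ]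
    {s : Set Ω} {r : ℝ} (h : (μ s).toReal ≤ r) : μ s ≤ ENNReal.ofReal r := by
  rw [← ENNReal.ofReal_toReal (measure_ne_top μ s)]
  exact ENNReal.ofReal_le_ofReal h

/-- Bracketing of all cells by a finite family of boxes. -/
lemma exists_box_brackets {d : ℕ} (ν : Measure (Fin d → ℝ)) [IsProbabilityMeasure ν]
    {m : ℕ} (hm : 0 < m) :
    ∃ Box : (Fin d → ((Fin (m + 1) × Bool) × (Fin (m + 1) × Bool))) → Set (Fin d → ℝ),
      (∀ idx, MeasurableSet (Box idx)) ∧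
      ∀ a b : Fin d → EReal, ∃ idxU idxL,
        Box idxL ⊆ cellOf a b ∧ cellOf a b ⊆ Box idxU ∧
        ν (Box idxU \ Box idxL) ≤ ENNReal.ofReal (2 * d / m) := by
  classical
  have h1 : ∀ i : Fin d, IsProbabilityMeasure (ν.map (fun x => x i)) := fun i =>
    Measure.isProbabilityMeasure_map (measurable_pi_apply i).aemeasurable
  have h2 : ∀ i : Fin d, IsProbabilityMeasure (ν.map (fun x => -(x i))) := fun i =>
    Measure.isProbabilityMeasure_map ((measurable_pi_apply i).neg).aemeasurable
  choose q1 hq1 using fun i : Fin d => exists_brackets (ν.map (fun x => x i)) hm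
  choose q2 hq2 using fun i : Fin d => exists_brackets (ν.map (fun x => -(x i))) hm
  refine ⟨fun idx => {x | ∀ i, x i ∈ hcs (q1 i) m ((idx i).1.1.val, (idx i).1.2)
      ∧ (-(x i)) ∈ hcs (q2 i) m ((idx i).2.1.val, (idx i).2.2)}, ?_, ?_⟩
  · intro idx
    have heq : {x : Fin d → ℝ | ∀ i, x i ∈ hcs (q1 i) m ((idx i).1.1.val, (idx i).1.2)
        ∧ (-(x i)) ∈ hcs (q2 i) m ((idx i).2.1.val, (idx i).2.2)}
        = ⋂ i, (((fun x : Fin d → ℝ => x i) ⁻¹' hcs (q1 i) m ((idx i).1.1.val, (idx i).1.2))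
          ∩ ((fun x : Fin d → ℝ => -(x i)) ⁻¹' hcs (q2 i) m ((idx i).2.1.val, (idx i).2.2))) := by
      ext x; simp [Set.mem_iInter, Set.mem_inter_iff]
    dsimp only
    rw [heq]
    exact MeasurableSet.iInter fun i =>
      ((hcs_measurable _ _ _).preimage (measurable_pi_apply i)).inter
        ((hcs_measurable _ _ _).preimage ((measurable_pi_apply i).neg))
  · intro a b
    choose U1 L1 hU1le hL1le hL1sub hU1sub hgap1 using fun i => hq1 i (a i)
    choose U2 L2 hU2le hL2le hL2sub hU2sub hgap2 using fun i => hq2 i (-(b i))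
    refine ⟨fun i => ((⟨(U1 i).1, Nat.lt_succ_of_le (hU1le i)⟩, (U1 i).2),
                      (⟨(U2 i).1, Nat.lt_succ_of_le (hU2le i)⟩, (U2 i).2)),
            fun i => ((⟨(L1 i).1, Nat.lt_succ_of_le (hL1le i)⟩, (L1 i).2),
                      (⟨(L2 i).1, Nat.lt_succ_of_le (hL2le i)⟩, (L2 i).2)), ?_, ?_, ?_⟩
    · intro x hx
      intro i
      have h := hx i
      constructor
      · exact hL1sub i h.1
      · have h2' : -(b i) ≤ ((-(x i) : ℝ) : EReal) := hL2sub i h.2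
        rw [EReal.coe_neg] at h2'
        exact EReal.neg_le_neg_iff.1 h2'
    · intro x hx
      intro i
      have h := hx i
      refine ⟨hU1sub i h.1, ?_⟩
      apply hU2sub i
      show -(b i) ≤ ((-(x i) : ℝ) : EReal)
      rw [EReal.coe_neg]
      exact EReal.neg_le_neg_iff.2 h.2
    · have hsub : {x : Fin d → ℝ | ∀ i, x i ∈ hcs (q1 i) m (U1 i) ∧ (-(x i)) ∈ hcs (q2 i) m (U2 i)}
          \ {x | ∀ i, x i ∈ hcs (q1 i) m (L1 i) ∧ (-(x i)) ∈ hcs (q2 i) m (L2 i)}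
          ⊆ ⋃ i, (((fun x : Fin d → ℝ => x i) ⁻¹' (hcs (q1 i) m (U1 i) \ hcs (q1 i) m (L1 i)))
            ∪ ((fun x : Fin d → ℝ => -(x i)) ⁻¹' (hcs (q2 i) m (U2 i) \ hcs (q2 i) m (L2 i)))) := by
        rintro x ⟨hxU, hxL⟩
        simp only [Set.mem_setOf_eq, not_forall] at hxL
        obtain ⟨i, hi⟩ := hxL
        rw [not_and_or] at hi
        refine Set.mem_iUnion.2 ⟨i, ?_⟩
        rcases hi with h | h
        · exact Or.inl ⟨(hxU i).1, h⟩
        · exact Or.inr ⟨(hxU i).2, h⟩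
      refine le_trans (measure_mono hsub) ?_
      refine le_trans (measure_iUnion_le _) ?_
      rw [tsum_fintype]
      have hterm : ∀ i : Fin d,
          ν (((fun x : Fin d → ℝ => x i) ⁻¹' (hcs (q1 i) m (U1 i) \ hcs (q1 i) m (L1 i)))
            ∪ ((fun x : Fin d → ℝ => -(x i)) ⁻¹' (hcs (q2 i) m (U2 i) \ hcs (q2 i) m (L2 i))))
          ≤ ENNReal.ofReal (1 / m) + ENNReal.ofReal (1 / m) := by
        intro i
        refine le_trans (measure_union_le _ _) (add_le_add ?_ ?_)
        · rw [← Measure.map_apply (measurable_pi_apply i)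
            ((hcs_measurable _ _ _).diff (hcs_measurable _ _ _))]
          exact hgap1 i
        · rw [← Measure.map_apply (f := fun x : Fin d → ℝ => -(x i)) ((measurable_pi_apply i).neg)
            ((hcs_measurable _ _ _).diff (hcs_measurable _ _ _))]
          exact hgap2 i
      refine le_trans (Finset.sum_le_sum fun i _ => hterm i) ?_
      rw [Finset.sum_const, Finset.card_univ, Fintype.card_fin, nsmul_eq_mul,
        ← ENNReal.ofReal_add (by positivity) (by positivity),
        ← ENNReal.ofReal_natCast d, ← ENNReal.ofReal_mul (by positivity)]
      refine ENNReal.ofReal_le_ofReal (le_of_eq ?_)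
      field_simp
      ring

lemma meas_eval {n : ℕ} {E : Type*} [MeasurableSpace E] (j : Fin n) :
    Measurable (fun p : (Fin n → E) × (Fin n → Fin n) => p.1 (p.2 j)) := by
  intro s hs
  have heq : (fun p : (Fin n → E) × (Fin n → Fin n) => p.1 (p.2 j)) ⁻¹' s
      = ⋃ κ : Fin n, (((fun p : (Fin n → E) × (Fin n → Fin n) => p.2 j) ⁻¹' {κ})
        ∩ ((fun p : (Fin n → E) × (Fin n → Fin n) => p.1 κ) ⁻¹' s)) := by
    ext p
    simp only [Set.mem_preimage, Set.mem_iUnion, Set.mem_inter_iff, Set.mem_singleton_iff]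
    constructor
    · intro h; exact ⟨p.2 j, rfl, h⟩
    · rintro ⟨κ, hκ, h⟩; rwa [hκ]
  rw [heq]
  refine MeasurableSet.iUnion fun κ => MeasurableSet.inter ?_ ?_
  · exact ((measurable_pi_apply j).comp measurable_snd) (measurableSet_singleton κ)
  · exact ((measurable_pi_apply κ).comp measurable_fst) hs

/-- The bootstrap deviation bound, by conditioning on the data via independence. -/
lemma boot_bound {Ω : Type*} [MeasurableSpace Ω] (μ : Measure Ω) [IsProbabilityMeasure μ]
    {n d : ℕ} (hn : 0 < n)
    (X : Fin n → Ω → (Fin d → ℝ)) (hXm : ∀ j, Measurable (X j))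
    (I : Fin n → Ω → Fin n) (hIm : ∀ j, Measurable (I j))
    (hIindep : iIndepFun I μ)
    (hIunif : ∀ j κ, μ {ω | I j ω = κ} = (n : ENNReal)⁻¹)
    (hIX : IndepFun (fun ω => fun j => X j ω) (fun ω => fun j => I j ω) μ)
    (B : Set (Fin d → ℝ)) (hB : MeasurableSet B) (t : ℝ) (ht : 0 < t) :
    μ {ω | t < |(∑ j, B.indicator (fun _ => (1 : ℝ)) (X (I j ω) ω))
        - ∑ κ, B.indicator (fun _ => (1 : ℝ)) (X κ ω)|}
      ≤ ENNReal.ofReal (2 * Real.exp (-t ^ 2 / (2 * n))) := by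
  classical
  have hnR : (0 : ℝ) < n := by exact_mod_cast hn
  set φ : (Fin n → (Fin d → ℝ)) × (Fin n → Fin n) → ℝ :=
    fun p => |(∑ j, B.indicator (fun _ => (1 : ℝ)) (p.1 (p.2 j)))
      - ∑ κ, B.indicator (fun _ => (1 : ℝ)) (p.1 κ)| with hφdef
  have hφm : Measurable φ := by
    apply Measurable.abs
    apply Measurable.sub
    · exact Finset.measurable_sum _ fun j _ =>
        (measurable_const.indicator hB).comp (meas_eval j)
    · exact Finset.measurable_sum _ fun κ _ =>
        (measurable_const.indicator hB).comp ((measurable_pi_apply κ).comp measurable_fst)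
  set S : Set ((Fin n → (Fin d → ℝ)) × (Fin n → Fin n)) := {p | t < φ p} with hSdef
  have hSm : MeasurableSet S := measurableSet_lt measurable_const hφm
  have hUm : Measurable (fun ω => fun j => X j ω) := measurable_pi_lambda _ hXm
  have hVm : Measurable (fun ω => fun j => I j ω) := measurable_pi_lambda _ hIm
  have hE : {ω | t < |(∑ j, B.indicator (fun _ => (1 : ℝ)) (X (I j ω) ω))
      - ∑ κ, B.indicator (fun _ => (1 : ℝ)) (X κ ω)|}
      = (fun ω => ((fun j => X j ω), (fun j => I j ω))) ⁻¹' S := rfl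
  have hmap := (indepFun_iff_map_prod_eq_prod_map_map hUm.aemeasurable hVm.aemeasurable).1 hIX
  rw [hE, ← Measure.map_apply (hUm.prodMk hVm) hSm, hmap, Measure.prod_apply hSm]
  have hinner : ∀ x : Fin n → (Fin d → ℝ),
      (μ.map (fun ω => fun j => I j ω)) (Prod.mk x ⁻¹' S)
        ≤ ENNReal.ofReal (2 * Real.exp (-t ^ 2 / (2 * n))) := by
    intro x
    set F' : Set (Fin n) := {κ | x κ ∈ B} with hF'def
    set p' : ℝ := (∑ κ, F'.indicator (fun _ => (1 : ℝ)) κ) / n with hp'def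
    have hcount : (∑ κ, F'.indicator (fun _ => (1 : ℝ)) κ)
        = ((Finset.univ.filter (fun κ : Fin n => κ ∈ F')).card : ℝ) := by
      rw [← Finset.sum_boole]
      exact Finset.sum_congr rfl fun κ _ => by rw [Set.indicator_apply]
    have hp' : ∀ j, (μ (I j ⁻¹' F')).toReal = p' := by
      intro j
      have hpre : I j ⁻¹' F' = ⋃ κ ∈ (Finset.univ.filter (fun κ : Fin n => κ ∈ F')),
          {ω | I j ω = κ} := by
        ext ω
        simp only [Set.mem_preimage, Set.mem_iUnion, Finset.mem_filter, Finset.mem_univ,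
          true_and, Set.mem_setOf_eq]
        constructor
        · intro h; exact ⟨I j ω, h, rfl⟩
        · rintro ⟨κ, hκ, h⟩; rwa [h]
      rw [hpre, measure_biUnion_finset ?disj ?meas]
      · simp only [hIunif j]
        rw [Finset.sum_const, nsmul_eq_mul, ENNReal.toReal_mul, ENNReal.toReal_natCast,
          ENNReal.toReal_inv, ENNReal.toReal_natCast, hp'def, hcount]
        ring
      case disj =>
        intro κ _ κ' _ hne
        simp only [Function.onFun]
        apply Set.disjoint_left.2
        intro ω h1 h2
        simp only [Set.mem_setOf_eq] at h1 h2
        exact hne (h1 ▸ h2 ▸ rfl)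
      case meas =>
        intro κ _
        exact (hIm j) (measurableSet_singleton κ)
    have hpre2 : (fun ω => fun j => I j ω) ⁻¹' (Prod.mk x ⁻¹' S)
        = {ω | t < |(∑ j, F'.indicator (fun _ => (1 : ℝ)) (I j ω)) - n * p'|} := by
      ext ω
      simp only [Set.mem_preimage, hSdef, Set.mem_setOf_eq, hφdef]
      have harg1 : ∀ j, B.indicator (fun _ => (1 : ℝ)) (x (I j ω))
          = F'.indicator (fun _ => (1 : ℝ)) (I j ω) := by
        intro j
        rw [Set.indicator_apply, Set.indicator_apply]
        rfl
      have harg2 : (∑ κ, B.indicator (fun _ => (1 : ℝ)) (x κ)) = n * p' := by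
        have : (∑ κ, B.indicator (fun _ => (1 : ℝ)) (x κ))
            = ∑ κ, F'.indicator (fun _ => (1 : ℝ)) κ := by
          refine Finset.sum_congr rfl fun κ _ => ?_
          rw [Set.indicator_apply, Set.indicator_apply]
          rfl
        rw [this, hp'def]
        field_simp
      rw [harg2]
      have hsum : (∑ j, B.indicator (fun _ => (1 : ℝ)) (x (I j ω)))
          = ∑ j, F'.indicator (fun _ => (1 : ℝ)) (I j ω) :=
        Finset.sum_congr rfl fun j _ => harg1 j
      rw [hsum]
    rw [Measure.map_apply hVm (measurable_prodMk_left hSm), hpre2]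
    exact meas_le_ofReal (hb_ineq μ hn I hIm hIindep F' .of_discrete p' hp' t ht)
  calc ∫⁻ x, (μ.map (fun ω => fun j => I j ω)) (Prod.mk x ⁻¹' S)
        ∂(μ.map (fun ω => fun j => X j ω))
      ≤ ∫⁻ _x, ENNReal.ofReal (2 * Real.exp (-t ^ 2 / (2 * n)))
        ∂(μ.map (fun ω => fun j => X j ω)) := lintegral_mono hinner
    _ = ENNReal.ofReal (2 * Real.exp (-t ^ 2 / (2 * n))) := by
        haveI : IsProbabilityMeasure (μ.map (fun ω => fun j => X j ω)) :=
          Measure.isProbabilityMeasure_map hUm.aemeasurable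
        rw [lintegral_const, measure_univ, mul_one]


theorem stmt12 {Ω θ : Type*} [MeasurableSpace Ω] [MeasurableSpace θ]
    (μ : Measure Ω) [IsProbabilityMeasure μ] (n d : ℕ)
    -- the original sample and the independent second sample
    (X Xd : Fin n → Ω → (Fin d → ℝ))
    (hXm : ∀ j, Measurable (X j)) (hXdm : ∀ j, Measurable (Xd j))
    (hXindep : iIndepFun X μ)
    (hXdindep : iIndepFun Xd μ)
    (hid : ∀ j j', Measure.map (X j) μ = Measure.map (Xd j') μ)
    -- the bootstrap indices Θ¹ : i.i.d. uniform, and extra tree randomness Θ² = T,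
    -- both independent of the data
    (I : Fin n → Ω → Fin n) (hIm : ∀ j, Measurable (I j)) (T : Ω → θ) (hTm : Measurable T)
    (hIindep : iIndepFun I μ)
    (hIunif : ∀ j κ, μ {ω | I j ω = κ} = (n : ENNReal)⁻¹)
    (hITX : IndepFun (fun ω => (fun j => I j ω, T ω)) (fun ω => fun j => X j ω) μ)
    -- the second sample is independent of everything used to build the tree
    (hsep : IndepFun (fun ω => (fun j => X j ω, fun j => I j ω, T ω))
      (fun ω => fun j => Xd j ω) μ)
    -- the tree cell containing x is a box built measurably from (D_n, Θ)
    (g : ((Fin n → (Fin d → ℝ)) × (Fin n → Fin n) × θ) →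
      (Fin d → EReal) × (Fin d → EReal))
    (hg : Measurable g)
    (ε : ℝ) (hε : 0 < ε) :
    (μ {ω | ε <
        |(∑ j, Set.indicator
            (cellOf (g (fun j => X j ω, fun j => I j ω, T ω)).1
                    (g (fun j => X j ω, fun j => I j ω, T ω)).2)
            (fun _ => (1 : ℝ)) (X (I j ω) ω))
          - ∑ j, Set.indicator
            (cellOf (g (fun j => X j ω, fun j => I j ω, T ω)).1
                    (g (fun j => X j ω, fun j => I j ω, T ω)).2)
            (fun _ => (1 : ℝ)) (Xd j ω)|}).toReal ≤
      24 * (n + 1) ^ (2 * d) * Real.exp (-(ε ^ 2) / (288 * n)) := by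
  classical
  by_cases hεn : (n : ℝ) ≤ ε
  · -- the event is empty since the sums differ by at most n
    have hempty : {ω | ε <
        |(∑ j, Set.indicator
            (cellOf (g (fun j => X j ω, fun j => I j ω, T ω)).1
                    (g (fun j => X j ω, fun j => I j ω, T ω)).2)
            (fun _ => (1 : ℝ)) (X (I j ω) ω))
          - ∑ j, Set.indicator
            (cellOf (g (fun j => X j ω, fun j => I j ω, T ω)).1
                    (g (fun j => X j ω, fun j => I j ω, T ω)).2)
            (fun _ => (1 : ℝ)) (Xd j ω)|} = (∅ : Set Ω) := by
      ext ω
      simp only [Set.mem_setOf_eq, Set.mem_empty_iff_false, iff_false, not_lt]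
      have hA := sum_ind_bounds
        (cellOf (g (fun j => X j ω, fun j => I j ω, T ω)).1
                (g (fun j => X j ω, fun j => I j ω, T ω)).2) (fun j => X (I j ω) ω)
      have hB := sum_ind_bounds
        (cellOf (g (fun j => X j ω, fun j => I j ω, T ω)).1
                (g (fun j => X j ω, fun j => I j ω, T ω)).2) (fun j => Xd j ω)
      refine le_trans (abs_le.2 ⟨?_, ?_⟩) hεn
      · linarith [hA.1, hA.2, hB.1, hB.2]
      · linarith [hA.1, hA.2, hB.1, hB.2]
    rw [hempty]
    simp only [measure_empty, ENNReal.toReal_zero]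
    positivity
  push_neg at hεn
  have hnR : (0 : ℝ) < n := hε.trans hεn
  have hn : 0 < n := by exact_mod_cast hnR
  by_cases htriv : 1 ≤ 24 * ((n : ℝ) + 1) ^ (2 * d) * Real.exp (-(ε ^ 2) / (288 * n))
  · refine le_trans ?_ htriv
    exact le_trans (ENNReal.toReal_mono ENNReal.one_ne_top prob_le_one) (by simp)
  push_neg at htriv
  -- setup
  set j0 : Fin n := ⟨0, hn⟩ with hj0
  have hmapX : ∀ j, μ.map (X j) = μ.map (X j0) := fun j => (hid j j0).trans (hid j0 j0).symm
  have hmapXd : ∀ j, μ.map (Xd j) = μ.map (X j0) := fun j => (hid j0 j).symm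
  set ν : Measure (Fin d → ℝ) := μ.map (X j0) with hν
  haveI hνP : IsProbabilityMeasure ν := Measure.isProbabilityMeasure_map (hXm j0).aemeasurable
  set m : ℕ := ⌈(4 * d * n : ℝ) / ε⌉₊ + 1 with hmdef
  have hm : 0 < m := Nat.succ_pos _
  have hmR : (0 : ℝ) < m := by exact_mod_cast hm
  have hm4 : 4 * (d : ℝ) * n / ε ≤ m := by
    rw [hmdef]; push_cast
    exact (Nat.le_ceil _).trans (by linarith)
  have hm2 : (m : ℝ) ≤ 4 * d * n / ε + 2 := by
    rw [hmdef]; push_cast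
    have := Nat.ceil_lt_add_one (show (0 : ℝ) ≤ 4 * d * n / ε by positivity)
    linarith
  obtain ⟨Box, hBoxm, hBox⟩ := exists_box_brackets ν hm
  have hε6 : 0 < ε / 6 := by positivity
  set w : ℝ := 2 * Real.exp (-(ε / 6) ^ 2 / (2 * n)) with hwdef
  have hw0 : 0 ≤ w := by positivity
  set W : ENNReal := ENNReal.ofReal w with hWdef
  set Ev1 : (Fin d → ((Fin (m + 1) × Bool) × (Fin (m + 1) × Bool))) → Set Ω := fun idx =>
    {ω | ε / 6 < |(∑ j, (Box idx).indicator (fun _ => (1 : ℝ)) (X (I j ω) ω))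
      - ∑ κ, (Box idx).indicator (fun _ => (1 : ℝ)) (X κ ω)|} with hEv1def
  set Ev2 : (Fin d → ((Fin (m + 1) × Bool) × (Fin (m + 1) × Bool))) → Set Ω := fun idx =>
    {ω | ε / 6 < |(∑ j, (Box idx).indicator (fun _ => (1 : ℝ)) (X j ω))
      - n * (ν (Box idx)).toReal|} with hEv2def
  set Ev3 : (Fin d → ((Fin (m + 1) × Bool) × (Fin (m + 1) × Bool))) → Set Ω := fun idx =>
    {ω | ε / 6 < |(∑ j, (Box idx).indicator (fun _ => (1 : ℝ)) (Xd j ω))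
      - n * (ν (Box idx)).toReal|} with hEv3def
  have hIX : IndepFun (fun ω => fun j => X j ω) (fun ω => fun j => I j ω) μ :=
    hITX.symm.comp measurable_id measurable_fst
  have hEv1b : ∀ idx, μ (Ev1 idx) ≤ W := fun idx =>
    boot_bound μ hn X hXm I hIm hIindep hIunif hIX (Box idx) (hBoxm idx) (ε / 6) hε6
  have hEv2b : ∀ idx, μ (Ev2 idx) ≤ W := by
    intro idx
    refine meas_le_ofReal (hb_ineq μ hn X hXm hXindep (Box idx) (hBoxm idx)
      ((ν (Box idx)).toReal) (fun j => ?_) (ε / 6) hε6)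
    rw [← Measure.map_apply (hXm j) (hBoxm idx), hmapX j]
  have hEv3b : ∀ idx, μ (Ev3 idx) ≤ W := by
    intro idx
    refine meas_le_ofReal (hb_ineq μ hn Xd hXdm hXdindep (Box idx) (hBoxm idx)
      ((ν (Box idx)).toReal) (fun j => ?_) (ε / 6) hε6)
    rw [← Measure.map_apply (hXdm j) (hBoxm idx), hmapXd j]
  -- the key inclusion
  have hsub : {ω | ε <
      |(∑ j, Set.indicator
          (cellOf (g (fun j => X j ω, fun j => I j ω, T ω)).1
                  (g (fun j => X j ω, fun j => I j ω, T ω)).2)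
          (fun _ => (1 : ℝ)) (X (I j ω) ω))
        - ∑ j, Set.indicator
          (cellOf (g (fun j => X j ω, fun j => I j ω, T ω)).1
                  (g (fun j => X j ω, fun j => I j ω, T ω)).2)
          (fun _ => (1 : ℝ)) (Xd j ω)|}
      ⊆ ⋃ idx, (Ev1 idx ∪ (Ev2 idx ∪ Ev3 idx)) := by
    intro ω hω
    simp only [Set.mem_setOf_eq] at hω
    obtain ⟨idxU, idxL, hLsub, hUsub, hgap⟩ :=
      hBox (g (fun j => X j ω, fun j => I j ω, T ω)).1
           (g (fun j => X j ω, fun j => I j ω, T ω)).2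
    have hLU : Box idxL ⊆ Box idxU := hLsub.trans hUsub
    have hAU : (∑ j, Set.indicator
        (cellOf (g (fun j => X j ω, fun j => I j ω, T ω)).1
                (g (fun j => X j ω, fun j => I j ω, T ω)).2)
        (fun _ => (1 : ℝ)) (X (I j ω) ω))
        ≤ ∑ j, (Box idxU).indicator (fun _ => (1 : ℝ)) (X (I j ω) ω) :=
      Finset.sum_le_sum fun j _ =>
        Set.indicator_le_indicator_of_subset hUsub (fun _ => zero_le_one) _
    have hAL : (∑ j, (Box idxL).indicator (fun _ => (1 : ℝ)) (X (I j ω) ω))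
        ≤ ∑ j, Set.indicator
        (cellOf (g (fun j => X j ω, fun j => I j ω, T ω)).1
                (g (fun j => X j ω, fun j => I j ω, T ω)).2)
        (fun _ => (1 : ℝ)) (X (I j ω) ω) :=
      Finset.sum_le_sum fun j _ =>
        Set.indicator_le_indicator_of_subset hLsub (fun _ => zero_le_one) _
    have hBU : (∑ j, Set.indicator
        (cellOf (g (fun j => X j ω, fun j => I j ω, T ω)).1
                (g (fun j => X j ω, fun j => I j ω, T ω)).2)
        (fun _ => (1 : ℝ)) (Xd j ω))
        ≤ ∑ j, (Box idxU).indicator (fun _ => (1 : ℝ)) (Xd j ω) :=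
      Finset.sum_le_sum fun j _ =>
        Set.indicator_le_indicator_of_subset hUsub (fun _ => zero_le_one) _
    have hBL : (∑ j, (Box idxL).indicator (fun _ => (1 : ℝ)) (Xd j ω))
        ≤ ∑ j, Set.indicator
        (cellOf (g (fun j => X j ω, fun j => I j ω, T ω)).1
                (g (fun j => X j ω, fun j => I j ω, T ω)).2)
        (fun _ => (1 : ℝ)) (Xd j ω) :=
      Finset.sum_le_sum fun j _ =>
        Set.indicator_le_indicator_of_subset hLsub (fun _ => zero_le_one) _
    have hgapR : (ν (Box idxU)).toReal ≤ (ν (Box idxL)).toReal + 2 * d / m := by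
      have h1 : ν (Box idxU) ≤ ν (Box idxL) + ν (Box idxU \ Box idxL) := by
        have h2 := measure_le_inter_add_diff ν (Box idxU) (Box idxL)
        rwa [Set.inter_eq_self_of_subset_right hLU] at h2
      have h3 : (ν (Box idxU \ Box idxL)).toReal ≤ 2 * d / m :=
        ENNReal.toReal_le_of_le_ofReal (by positivity) hgap
      have h4 : (ν (Box idxU)).toReal ≤ ((ν (Box idxL)) + ν (Box idxU \ Box idxL)).toReal :=
        ENNReal.toReal_mono
          (ENNReal.add_ne_top.2 ⟨measure_ne_top _ _, measure_ne_top _ _⟩) h1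
      rw [ENNReal.toReal_add (measure_ne_top _ _) (measure_ne_top _ _)] at h4
      linarith
    have h5 : (n : ℝ) * (2 * d / m) ≤ ε / 2 := by
      have h6 : 4 * (d : ℝ) * n ≤ ε * m := by
        have h7 := mul_le_mul_of_nonneg_left hm4 hε.le
        rwa [show ε * (4 * (d : ℝ) * n / ε) = 4 * d * n by field_simp] at h7
      have h8 : (n : ℝ) * (2 * d / m) = 2 * d * n / m := by ring
      rw [h8, div_le_iff₀ hmR]
      nlinarith
    have hstep : (n : ℝ) * (ν (Box idxU)).toReal
        ≤ n * (ν (Box idxL)).toReal + ε / 2 := by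
      have h8 := mul_le_mul_of_nonneg_left hgapR (by positivity : (0 : ℝ) ≤ n)
      have h9 : (n : ℝ) * ((ν (Box idxL)).toReal + 2 * d / m)
          = n * (ν (Box idxL)).toReal + n * (2 * d / m) := by ring
      rw [h9] at h8
      linarith
    rcases lt_abs.1 hω with hc | hc
    · by_cases h1 : ω ∈ Ev1 idxU
      · exact Set.mem_iUnion.2 ⟨idxU, Or.inl h1⟩
      by_cases h2 : ω ∈ Ev2 idxU
      · exact Set.mem_iUnion.2 ⟨idxU, Or.inr (Or.inl h2)⟩
      refine Set.mem_iUnion.2 ⟨idxL, Or.inr (Or.inr ?_)⟩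
      simp only [hEv1def, Set.mem_setOf_eq, not_lt] at h1
      simp only [hEv2def, Set.mem_setOf_eq, not_lt] at h2
      simp only [hEv3def, Set.mem_setOf_eq]
      obtain ⟨h1a, h1b⟩ := abs_le.1 h1
      obtain ⟨h2a, h2b⟩ := abs_le.1 h2
      have hkey : ε / 6 < (n : ℝ) * (ν (Box idxL)).toReal
          - ∑ j, (Box idxL).indicator (fun _ => (1 : ℝ)) (Xd j ω) := by linarith
      calc ε / 6 < (n : ℝ) * (ν (Box idxL)).toReal
          - ∑ j, (Box idxL).indicator (fun _ => (1 : ℝ)) (Xd j ω) := hkey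
        _ ≤ |(∑ j, (Box idxL).indicator (fun _ => (1 : ℝ)) (Xd j ω))
            - n * (ν (Box idxL)).toReal| := by
          rw [abs_sub_comm]
          exact le_abs_self _
    · by_cases h3 : ω ∈ Ev3 idxU
      · exact Set.mem_iUnion.2 ⟨idxU, Or.inr (Or.inr h3)⟩
      by_cases h2 : ω ∈ Ev2 idxL
      · exact Set.mem_iUnion.2 ⟨idxL, Or.inr (Or.inl h2)⟩
      refine Set.mem_iUnion.2 ⟨idxL, Or.inl ?_⟩
      simp only [hEv3def, Set.mem_setOf_eq, not_lt] at h3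
      simp only [hEv2def, Set.mem_setOf_eq, not_lt] at h2
      simp only [hEv1def, Set.mem_setOf_eq]
      obtain ⟨h3a, h3b⟩ := abs_le.1 h3
      obtain ⟨h2a, h2b⟩ := abs_le.1 h2
      have hkey : ε / 6 < (∑ κ, (Box idxL).indicator (fun _ => (1 : ℝ)) (X κ ω))
          - ∑ j, (Box idxL).indicator (fun _ => (1 : ℝ)) (X (I j ω) ω) := by linarith
      calc ε / 6 < (∑ κ, (Box idxL).indicator (fun _ => (1 : ℝ)) (X κ ω))
          - ∑ j, (Box idxL).indicator (fun _ => (1 : ℝ)) (X (I j ω) ω) := hkey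
        _ ≤ |(∑ j, (Box idxL).indicator (fun _ => (1 : ℝ)) (X (I j ω) ω))
            - ∑ κ, (Box idxL).indicator (fun _ => (1 : ℝ)) (X κ ω)| := by
          rw [abs_sub_comm]
          exact le_abs_self _
  -- union bound
  have hμ1 : μ {ω | ε <
      |(∑ j, Set.indicator
          (cellOf (g (fun j => X j ω, fun j => I j ω, T ω)).1
                  (g (fun j => X j ω, fun j => I j ω, T ω)).2)
          (fun _ => (1 : ℝ)) (X (I j ω) ω))
        - ∑ j, Set.indicator
          (cellOf (g (fun j => X j ω, fun j => I j ω, T ω)).1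
                  (g (fun j => X j ω, fun j => I j ω, T ω)).2)
          (fun _ => (1 : ℝ)) (Xd j ω)|}
      ≤ ∑' idx, μ (Ev1 idx ∪ (Ev2 idx ∪ Ev3 idx)) :=
    (measure_mono hsub).trans (measure_iUnion_le _)
  rw [tsum_fintype] at hμ1
  have hμ2 : μ {ω | ε <
      |(∑ j, Set.indicator
          (cellOf (g (fun j => X j ω, fun j => I j ω, T ω)).1
                  (g (fun j => X j ω, fun j => I j ω, T ω)).2)
          (fun _ => (1 : ℝ)) (X (I j ω) ω))
        - ∑ j, Set.indicator
          (cellOf (g (fun j => X j ω, fun j => I j ω, T ω)).1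
                  (g (fun j => X j ω, fun j => I j ω, T ω)).2)
          (fun _ => (1 : ℝ)) (Xd j ω)|}
      ≤ (Fintype.card (Fin d → ((Fin (m + 1) × Bool) × (Fin (m + 1) × Bool)))) • (W + (W + W)) := by
    refine hμ1.trans ?_
    refine le_trans (Finset.sum_le_sum (fun idx _ =>
      (measure_union_le _ _).trans (add_le_add (hEv1b idx)
        ((measure_union_le _ _).trans (add_le_add (hEv2b idx) (hEv3b idx)))))) ?_
    rw [Finset.sum_const, Finset.card_univ]
  have hsmul : ((Fintype.card (Fin d → ((Fin (m + 1) × Bool) × (Fin (m + 1) × Bool)))) • (W + (W + W)))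
      = ENNReal.ofReal ((Fintype.card (Fin d → ((Fin (m + 1) × Bool) × (Fin (m + 1) × Bool))) : ℝ)
        * (3 * w)) := by
    rw [hWdef, ← ENNReal.ofReal_add hw0 hw0, ← ENNReal.ofReal_add hw0 (by positivity),
      nsmul_eq_mul, ← ENNReal.ofReal_natCast, ← ENNReal.ofReal_mul (by positivity)]
    congr 1
    ring
  rw [hsmul] at hμ2
  have hfinal := ENNReal.toReal_mono ENNReal.ofReal_ne_top hμ2
  rw [ENNReal.toReal_ofReal (by positivity)] at hfinal
  refine le_trans hfinal ?_
  have hcard : (Fintype.card (Fin d → ((Fin (m + 1) × Bool) × (Fin (m + 1) × Bool))) : ℝ)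
      = (2 * ((m : ℝ) + 1)) ^ (2 * d) := by
    have hcn : Fintype.card (Fin d → ((Fin (m + 1) × Bool) × (Fin (m + 1) × Bool)))
        = (2 * (m + 1)) ^ (2 * d) := by
      simp only [Fintype.card_fun, Fintype.card_prod, Fintype.card_bool, Fintype.card_fin]
      rw [pow_mul]
      ring
    rw [hcn]
    push_cast
    ring
  rw [hcard, hwdef]
  exact final_arith hε hεn hm2 htriv
end
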